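/- Let X be a finite nonempty set, n ≥ 1, q : X → ℝ^k, φ : X → X, and c ∈ ℝ^k with cᵢ > 0. For a database x ∈ X^n let q̄(x) = (1/n) Σ_{l=1}^n q(x_l) and let M(x) be the probability measure on ℝ^k with Lebesgue density z ↦ ∏ᵢ (1/(2cᵢ)) exp(−|zᵢ − cᵢ·q̄(φ∘x)ᵢ|/cᵢ). Then for every x ∈ X^n, ∫_{ℝ^k} ‖z − q̄(x)‖₂² dM(x)(z) ≤ 2 ( max_{u∈X} ‖c⊙q(φ(u)) − q(u)‖₂² + 2 ‖c‖₂² ), where (c⊙w)ᵢ = cᵢ wᵢ. -/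

import Mathlib

open MeasureTheory Finset

/-- The Laplace mechanism with scales `c`, centered at `a ∈ ℝ^k`. -/
noncomputable def lapMech {k : ℕ} (c a : Fin k → ℝ) : Measure (Fin k → ℝ) :=
  volume.withDensity fun z =>
    ENNReal.ofReal (∏ i, (1 / (2 * c i)) * Real.exp (-|z i - a i| / c i))

section AuxLemmas
open Real Set

-- 1-d: integrability and value of ∫_{Ioi 0} t^m exp(-t/c)
lemma aux_int_Ioi {c : ℝ} (hc : 0 < c) (m : ℕ) :
    IntegrableOn (fun t : ℝ => t ^ m * Real.exp (-(t / c))) (Ioi 0) := by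
  have h := integrableOn_rpow_mul_exp_neg_mul_rpow (p := 1) (s := m) (b := 1/c)
    (lt_of_lt_of_le (by norm_num) (Nat.cast_nonneg m)) (by norm_num) (by positivity)
  refine h.congr_fun (fun t ht => ?_) measurableSet_Ioi
  beta_reduce
  rw [Real.rpow_one, Real.rpow_natCast]
  ring_nf

lemma aux_val_Ioi {c : ℝ} (hc : 0 < c) (m : ℕ) :
    ∫ t in Ioi (0:ℝ), t ^ m * Real.exp (-(t / c)) = c ^ (m + 1) * m.factorial := by
  have h := integral_rpow_mul_exp_neg_mul_Ioi (a := (m : ℝ) + 1) (r := 1/c)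
    (by positivity) (by positivity)
  rw [show ((m:ℝ) + 1 - 1) = (m:ℝ) by ring] at h
  have : ∫ t in Ioi (0:ℝ), t ^ m * Real.exp (-(t / c))
      = ∫ t in Ioi (0:ℝ), t ^ (m:ℝ) * Real.exp (-(1/c * t)) := by
    refine setIntegral_congr_fun measurableSet_Ioi (fun t ht => ?_)
    rw [Real.rpow_natCast]; ring_nf
  rw [this, h, Real.Gamma_nat_eq_factorial, one_div_one_div,
    show ((m:ℝ)+1) = ((m+1 : ℕ):ℝ) by push_cast; ring, Real.rpow_natCast]

lemma aux_integrable_comp_abs {f : ℝ → ℝ} (hf : IntegrableOn f (Ioi 0)) :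
    Integrable (fun x => f |x|) := by
  have hf' : IntegrableOn (fun x => f |x|) (Ioi 0) :=
    hf.congr_fun (fun t ht => by rw [abs_of_pos ht]) measurableSet_Ioi
  have int_Iic : IntegrableOn (fun x ↦ f |x|) (Iic 0) := by
    rw [← Measure.map_neg_eq_self (volume : Measure ℝ)]
    let m : MeasurableEmbedding fun x : ℝ => -x := (Homeomorph.neg ℝ).measurableEmbedding
    rw [m.integrableOn_map_iff]
    simp_rw [Function.comp_def, abs_neg, neg_preimage, neg_Iic, neg_zero]
    exact Iff.mpr integrableOn_Ici_iff_integrableOn_Ioi hf'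
  rw [← integrableOn_univ, ← Iic_union_Ioi (a := (0:ℝ))]
  exact int_Iic.union hf'

lemma aux_integrable_line {c : ℝ} (hc : 0 < c) (m : ℕ) :
    Integrable (fun t : ℝ => |t| ^ m * Real.exp (-(|t| / c))) :=
  aux_integrable_comp_abs (f := fun t => t ^ m * Real.exp (-(t / c))) (aux_int_Ioi hc m)

lemma aux_val_line {c : ℝ} (hc : 0 < c) (m : ℕ) :
    ∫ t : ℝ, |t| ^ m * Real.exp (-(|t| / c)) = 2 * (c ^ (m + 1) * m.factorial) := by
  rw [show (fun t : ℝ => |t| ^ m * Real.exp (-(|t| / c)))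
      = fun t : ℝ => (fun s => s ^ m * Real.exp (-(s / c))) |t| from rfl,
    integral_comp_abs (f := fun s => s ^ m * Real.exp (-(s / c))), aux_val_Ioi hc m]

lemma aux_integrable_shift {c a : ℝ} (hc : 0 < c) (m : ℕ) :
    Integrable (fun t : ℝ => |t - a| ^ m * Real.exp (-(|t - a| / c))) :=
  (aux_integrable_line hc m).comp_sub_right a

lemma aux_val_shift {c a : ℝ} (hc : 0 < c) (m : ℕ) :
    ∫ t : ℝ, |t - a| ^ m * Real.exp (-(|t - a| / c)) = 2 * (c ^ (m + 1) * m.factorial) := by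
  have h := integral_sub_right_eq_self (μ := volume)
    (fun s : ℝ => |s| ^ m * Real.exp (-(|s| / c))) a
  simpa [aux_val_line hc m] using h

noncomputable def lapD (c a : ℝ) (t : ℝ) : ℝ := (1 / (2 * c)) * Real.exp (-|t - a| / c)

lemma lapD_nonneg {c : ℝ} (hc : 0 < c) (a t : ℝ) : 0 ≤ lapD c a t := by
  unfold lapD; positivity

lemma lapD_integrable {c : ℝ} (hc : 0 < c) (a : ℝ) : Integrable (lapD c a) := by
  have h := (aux_integrable_shift (a := a) hc 0).const_mul (1 / (2 * c))
  refine h.congr (Filter.Eventually.of_forall fun t => ?_)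
  simp [lapD, neg_div]

lemma lapD_integral {c : ℝ} (hc : 0 < c) (a : ℝ) : ∫ t, lapD c a t = 1 := by
  have h := aux_val_shift (a := a) hc 0
  have : ∫ t, lapD c a t = (1 / (2 * c)) * ∫ t, |t - a| ^ 0 * Real.exp (-(|t - a| / c)) := by
    rw [← integral_const_mul]
    congr 1 with t
    simp [lapD, neg_div]
  rw [this, h]
  field_simp
  simp

lemma lapD_sq_integrable {c : ℝ} (hc : 0 < c) (a : ℝ) :
    Integrable (fun t => (t - a) ^ 2 * lapD c a t) := by
  have h := ((aux_integrable_shift (a := a) hc 2).const_mul (1 / (2 * c)))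
  refine h.congr (Filter.Eventually.of_forall fun t => ?_)
  simp only [lapD, neg_div, sq_abs]
  ring

lemma lapD_sq_integral {c : ℝ} (hc : 0 < c) (a : ℝ) :
    ∫ t, (t - a) ^ 2 * lapD c a t = 2 * c ^ 2 := by
  have h := aux_val_shift (a := a) hc 2
  have : ∫ t, (t - a) ^ 2 * lapD c a t
      = (1 / (2 * c)) * ∫ t, |t - a| ^ 2 * Real.exp (-(|t - a| / c)) := by
    rw [← integral_const_mul]
    congr 1 with t
    simp only [lapD, neg_div, sq_abs]
    ring
  rw [this, h]
  have : (Nat.factorial 2 : ℝ) = 2 := by norm_num [Nat.factorial]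
  rw [this]
  field_simp

lemma lapD_lintegral_one {c : ℝ} (hc : 0 < c) (a : ℝ) :
    ∫⁻ t, ENNReal.ofReal (lapD c a t) = 1 := by
  rw [← ofReal_integral_eq_lintegral_ofReal (lapD_integrable hc a)
    (Filter.Eventually.of_forall (lapD_nonneg hc a)), lapD_integral hc a, ENNReal.ofReal_one]

lemma lapD_lintegral_sq_le {c : ℝ} (hc : 0 < c) (a b : ℝ) :
    ∫⁻ t, ENNReal.ofReal ((t - b) ^ 2 * lapD c a t)
      ≤ ENNReal.ofReal (2 * (a - b) ^ 2 + 4 * c ^ 2) := by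
  have hInt : Integrable (fun t => (2 * (t - a) ^ 2 + 2 * (a - b) ^ 2) * lapD c a t) := by
    have h1 := ((lapD_sq_integrable hc a).const_mul 2)
    have h2 := ((lapD_integrable hc a).const_mul (2 * (a - b) ^ 2))
    refine (h1.add h2).congr (Filter.Eventually.of_forall fun t => ?_)
    simp only [Pi.add_apply]; ring
  calc ∫⁻ t, ENNReal.ofReal ((t - b) ^ 2 * lapD c a t)
      ≤ ∫⁻ t, ENNReal.ofReal ((2 * (t - a) ^ 2 + 2 * (a - b) ^ 2) * lapD c a t) := by
        refine lintegral_mono fun t => ENNReal.ofReal_le_ofReal ?_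
        have hb : (t - b) ^ 2 ≤ 2 * (t - a) ^ 2 + 2 * (a - b) ^ 2 := by nlinarith [sq_nonneg ((t - a) - (a - b))]
        exact mul_le_mul_of_nonneg_right hb (lapD_nonneg hc a t)
    _ = ENNReal.ofReal (∫ t, (2 * (t - a) ^ 2 + 2 * (a - b) ^ 2) * lapD c a t) := by
        rw [ofReal_integral_eq_lintegral_ofReal hInt (Filter.Eventually.of_forall fun t => by
          have := lapD_nonneg hc a t; positivity)]
    _ ≤ ENNReal.ofReal (2 * (a - b) ^ 2 + 4 * c ^ 2) := by
        refine ENNReal.ofReal_le_ofReal (le_of_eq ?_)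
        have : (fun t => (2 * (t - a) ^ 2 + 2 * (a - b) ^ 2) * lapD c a t)
            = fun t => 2 * ((t - a) ^ 2 * lapD c a t) + (2 * (a - b) ^ 2) * lapD c a t := by
          funext t; ring
        rw [this, integral_add ((lapD_sq_integrable hc a).const_mul 2)
          ((lapD_integrable hc a).const_mul (2 * (a - b) ^ 2)),
          integral_const_mul, integral_const_mul, lapD_sq_integral hc a, lapD_integral hc a]
        ring

lemma lintegral_fin_prod {n : ℕ} (f : Fin n → ℝ → ENNReal) (hf : ∀ i, Measurable (f i)) :
    ∫⁻ x : Fin n → ℝ, ∏ i, f i (x i) = ∏ i, ∫⁻ t, f i t := by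
  induction n with
  | zero =>
      simp only [Finset.univ_eq_empty, Finset.prod_empty, lintegral_const, one_mul]
      rw [MeasureTheory.volume_pi, Measure.pi_empty_univ]
  | succ n ih =>
      have hmp := (measurePreserving_piFinSuccAbove (fun _ : Fin (n+1) => (volume : Measure ℝ)) 0).symm
      have hmeas : Measurable fun x : Fin (n+1) → ℝ => ∏ i, f i (x i) :=
        Finset.measurable_prod _ fun i _ => (hf i).comp (measurable_pi_apply i)
      rw [MeasureTheory.volume_pi, ← hmp.lintegral_comp hmeas]
      simp_rw [MeasurableEquiv.piFinSuccAbove_symm_apply, Fin.insertNthEquiv,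
        Fin.prod_univ_succ, Fin.insertNth_zero]
      simp only [Fin.zero_succAbove, Equiv.coe_fn_mk, Fin.cons_zero, Fin.cons_succ, cast_eq]
      have hg : AEMeasurable (fun y : Fin n → ℝ => ∏ i, f i.succ (y i))
          (Measure.pi fun _ => volume) :=
        (Finset.measurable_prod Finset.univ fun i _ =>
          ((hf i.succ).comp (measurable_pi_apply i))).aemeasurable
      have hpm := lintegral_prod_mul (μ := (volume : Measure ℝ)) (f := f 0)
        (g := fun y : Fin n → ℝ => ∏ i, f i.succ (y i)) (hf 0).aemeasurable hg
      have h2 : (∫⁻ y : Fin n → ℝ, (fun y => ∏ i, f i.succ (y i)) y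
          ∂Measure.pi fun _ => volume) = ∏ i : Fin n, ∫⁻ t, f i.succ t := by
        rw [← MeasureTheory.volume_pi]
        exact ih (fun i => f i.succ) (fun i => hf i.succ)
      rw [h2] at hpm
      simpa using hpm

lemma sum_sq_avg_le {k n : ℕ} (hn : 1 ≤ n) (X : Type*) [Fintype X] [Nonempty X]
    (q : X → Fin k → ℝ) (φ : X → X) (c : Fin k → ℝ) (x : Fin n → X) :
    ∑ i, (c i * ((1/(n:ℝ)) * ∑ l, q (φ (x l)) i) - (1/(n:ℝ)) * ∑ l, q (x l) i) ^ 2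
      ≤ ⨆ u : X, ∑ i, (c i * q (φ u) i - q u i) ^ 2 := by
  set S := ⨆ u : X, ∑ i, (c i * q (φ u) i - q u i) ^ 2 with hSdef
  have hb : BddAbove (Set.range fun u : X => ∑ i, (c i * q (φ u) i - q u i) ^ 2) :=
    Set.Finite.bddAbove (Set.finite_range _)
  have hS : ∀ u, ∑ i, (c i * q (φ u) i - q u i) ^ 2 ≤ S := fun u => le_ciSup hb u
  have npos : (0:ℝ) < n := by exact_mod_cast Nat.lt_of_lt_of_le Nat.zero_lt_one hn
  have hnne : (n:ℝ) ≠ 0 := ne_of_gt npos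
  calc ∑ i, (c i * ((1/(n:ℝ)) * ∑ l, q (φ (x l)) i) - (1/(n:ℝ)) * ∑ l, q (x l) i) ^ 2
      = ∑ i, ((1/(n:ℝ)) * ∑ l, (c i * q (φ (x l)) i - q (x l) i)) ^ 2 := by
        refine Finset.sum_congr rfl fun i _ => ?_
        rw [Finset.sum_sub_distrib, mul_sub, ← Finset.mul_sum]
        ring
    _ ≤ ∑ i, (1/(n:ℝ)) * ∑ l, (c i * q (φ (x l)) i - q (x l) i) ^ 2 := by
        refine Finset.sum_le_sum fun i _ => ?_
        have hcs := sq_sum_le_card_mul_sum_sq (s := (Finset.univ : Finset (Fin n)))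
          (f := fun l => c i * q (φ (x l)) i - q (x l) i)
        simp only [Finset.card_univ, Fintype.card_fin] at hcs
        calc ((1/(n:ℝ)) * ∑ l, (c i * q (φ (x l)) i - q (x l) i)) ^ 2
            = (1/(n:ℝ))^2 * (∑ l, (c i * q (φ (x l)) i - q (x l) i)) ^ 2 := by ring
          _ ≤ (1/(n:ℝ))^2 * ((n:ℝ) * ∑ l, (c i * q (φ (x l)) i - q (x l) i) ^ 2) :=
              mul_le_mul_of_nonneg_left hcs (by positivity)
          _ = (1/(n:ℝ)) * ∑ l, (c i * q (φ (x l)) i - q (x l) i) ^ 2 := by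
              field_simp
    _ = (1/(n:ℝ)) * ∑ l, ∑ i, (c i * q (φ (x l)) i - q (x l) i) ^ 2 := by
        rw [← Finset.mul_sum, Finset.sum_comm]
    _ ≤ (1/(n:ℝ)) * ∑ l : Fin n, S := by
        refine mul_le_mul_of_nonneg_left (Finset.sum_le_sum fun l _ => hS (x l)) (by positivity)
    _ = S := by
        rw [Finset.sum_const, Finset.card_univ, Fintype.card_fin, nsmul_eq_mul]
        field_simp

end AuxLemmas

/-- Expected squared ℓ₂ error of the Laplace mechanism for statistical queries:
`∫ ‖z − q̄(x)‖₂² dM(x)(z) ≤ 2 (max_{u∈X} ‖c⊙q(φ(u)) − q(u)‖₂² + 2‖c‖₂²)`. -/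
theorem stmt_17 {k : ℕ} (X : Type*) [Fintype X] [Nonempty X] (n : ℕ) (hn : 1 ≤ n)
    (q : X → Fin k → ℝ) (φ : X → X) (c : Fin k → ℝ) (hc : ∀ i, 0 < c i)
    (x : Fin n → X) :
    ∫⁻ z, ENNReal.ofReal (∑ i, (z i - (1 / (n : ℝ)) * ∑ l, q (x l) i) ^ 2)
        ∂ (lapMech c (fun i => c i * ((1 / (n : ℝ)) * ∑ l, q (φ (x l)) i)))
      ≤ ENNReal.ofReal (2 * ((⨆ u : X, ∑ i, (c i * q (φ u) i - q u i) ^ 2)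
          + 2 * ∑ i, (c i) ^ 2)) := by
  set A : Fin k → ℝ := fun i => c i * ((1 / (n : ℝ)) * ∑ l, q (φ (x l)) i) with hA
  set B : Fin k → ℝ := fun i => (1 / (n : ℝ)) * ∑ l, q (x l) i with hB
  have hlapDc : ∀ j : Fin k, Continuous (lapD (c j) (A j)) := by
    intro j
    unfold lapD
    fun_prop
  -- measurability facts
  have hGmeas : ∀ j : Fin k, Measurable fun t : ℝ => ENNReal.ofReal (lapD (c j) (A j) t) :=
    fun j => ((hlapDc j).measurable).ennreal_ofReal
  have hHmeas : ∀ i j : Fin k, Measurable fun t : ℝ =>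
      (if j = i then ENNReal.ofReal ((t - B j) ^ 2) else 1) * ENNReal.ofReal (lapD (c j) (A j) t) := by
    intro i j
    by_cases h : j = i
    · simp only [h, if_true]
      exact ((by fun_prop : Measurable fun t : ℝ => (t - B i) ^ 2).ennreal_ofReal).mul (hGmeas i)
    · simp only [if_neg h, one_mul]
      exact hGmeas j
  have hD : Measurable fun z : Fin k → ℝ =>
      ENNReal.ofReal (∏ i, (1 / (2 * c i)) * Real.exp (-|z i - A i| / c i)) := by
    refine Measurable.ennreal_ofReal ?_
    refine Finset.measurable_prod _ fun i _ => ?_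
    exact ((hlapDc i).measurable).comp (measurable_pi_apply i)
  have hF : Measurable fun z : Fin k → ℝ => ENNReal.ofReal (∑ i, (z i - B i) ^ 2) := by
    refine Measurable.ennreal_ofReal ?_
    refine Finset.measurable_sum _ fun i _ => ?_
    exact ((measurable_pi_apply i).sub measurable_const).pow_const 2
  rw [lapMech, lintegral_withDensity_eq_lintegral_mul volume hD hF]
  -- pointwise rewriting of the integrand
  have hpt : ∀ z : Fin k → ℝ,
      (ENNReal.ofReal (∏ i, (1 / (2 * c i)) * Real.exp (-|z i - A i| / c i)))
        * ENNReal.ofReal (∑ i, (z i - B i) ^ 2)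
      = ∑ i, ∏ j, (if j = i then ENNReal.ofReal ((z j - B j) ^ 2) else 1)
          * ENNReal.ofReal (lapD (c j) (A j) (z j)) := by
    intro z
    have hld : ∀ (i : Fin k) (t : ℝ),
        (1 / (2 * c i)) * Real.exp (-|t - A i| / c i) = lapD (c i) (A i) t := fun _ _ => rfl
    simp only [hld]
    rw [ENNReal.ofReal_prod_of_nonneg (fun i _ => lapD_nonneg (hc i) (A i) (z i)),
      ENNReal.ofReal_sum_of_nonneg (fun i _ => sq_nonneg _), Finset.mul_sum]
    refine Finset.sum_congr rfl fun i _ => ?_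
    rw [Finset.prod_mul_distrib, Finset.prod_ite_eq' Finset.univ i
      (fun j => ENNReal.ofReal ((z j - B j) ^ 2))]
    simp only [Finset.mem_univ, if_true]
    rw [mul_comm]
  calc ∫⁻ z : Fin k → ℝ, ((fun z : Fin k → ℝ => ENNReal.ofReal (∏ i, (1 / (2 * c i)) * Real.exp (-|z i - A i| / c i)))
        * fun z : Fin k → ℝ => ENNReal.ofReal (∑ i, (z i - B i) ^ 2)) z
      = ∑ i, ∫⁻ z : Fin k → ℝ, ∏ j, (if j = i then ENNReal.ofReal ((z j - B j) ^ 2) else 1)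
          * ENNReal.ofReal (lapD (c j) (A j) (z j)) := by
        rw [← lintegral_finset_sum]
        · exact lintegral_congr fun z => hpt z
        · intro i _
          exact Finset.measurable_prod _ fun j _ => (hHmeas i j).comp (measurable_pi_apply j)
    _ = ∑ i, ∏ j, ∫⁻ t : ℝ, (if j = i then ENNReal.ofReal ((t - B j) ^ 2) else 1)
          * ENNReal.ofReal (lapD (c j) (A j) t) := by
        refine Finset.sum_congr rfl fun i _ => ?_
        exact lintegral_fin_prod _ (fun j => hHmeas i j)
    _ ≤ ∑ i, ENNReal.ofReal (2 * (A i - B i) ^ 2 + 4 * c i ^ 2) := by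
        refine Finset.sum_le_sum fun i _ => ?_
        have hone : ∀ j : Fin k, j ≠ i → (∫⁻ t : ℝ, (if j = i then ENNReal.ofReal ((t - B j) ^ 2) else 1)
            * ENNReal.ofReal (lapD (c j) (A j) t)) = 1 := by
          intro j hj
          simp only [if_neg hj, one_mul]
          exact lapD_lintegral_one (hc j) (A j)
        rw [Finset.prod_eq_single_of_mem i (Finset.mem_univ i) (fun j _ hj => hone j hj)]
        simp only [if_pos rfl]
        calc ∫⁻ t : ℝ, ENNReal.ofReal ((t - B i) ^ 2) * ENNReal.ofReal (lapD (c i) (A i) t)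
            = ∫⁻ t : ℝ, ENNReal.ofReal ((t - B i) ^ 2 * lapD (c i) (A i) t) := by
              refine lintegral_congr fun t => ?_
              rw [ENNReal.ofReal_mul (sq_nonneg _)]
          _ ≤ ENNReal.ofReal (2 * (A i - B i) ^ 2 + 4 * c i ^ 2) :=
              lapD_lintegral_sq_le (hc i) (A i) (B i)
    _ ≤ ENNReal.ofReal (2 * ((⨆ u : X, ∑ i, (c i * q (φ u) i - q u i) ^ 2)
          + 2 * ∑ i, (c i) ^ 2)) := by
        rw [← ENNReal.ofReal_sum_of_nonneg (fun i _ => by positivity)]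
        refine ENNReal.ofReal_le_ofReal ?_
        have key := sum_sq_avg_le hn X q φ c x
        calc ∑ i, (2 * (A i - B i) ^ 2 + 4 * c i ^ 2)
            = 2 * (∑ i, (A i - B i) ^ 2) + 2 * (2 * ∑ i, c i ^ 2) := by
              rw [Finset.sum_add_distrib, ← Finset.mul_sum, ← Finset.mul_sum]; ring
          _ ≤ 2 * (⨆ u : X, ∑ i, (c i * q (φ u) i - q u i) ^ 2) + 2 * (2 * ∑ i, c i ^ 2) := by
              have : ∑ i, (A i - B i) ^ 2 ≤ ⨆ u : X, ∑ i, (c i * q (φ u) i - q u i) ^ 2 := key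
              linarith
          _ = 2 * ((⨆ u : X, ∑ i, (c i * q (φ u) i - q u i) ^ 2) + 2 * ∑ i, (c i) ^ 2) := by ring
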